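/- The elements f_i = x_i y_{i+1} - x_{i+1} y_i, for 1 ≤ i < n, form a regular sequence in the polynomial ring K[x_1,...,x_n,y_1,...,y_n]. -/

import Mathlib

open MvPolynomial

namespace Stmt6Aux

/-- `b, c` have trivial common annihilator. -/
def Good {A : Type} [CommRing A] (b c : A) : Prop :=
  ∀ g : A, g * b = 0 → g * c = 0 → g = 0

/-- Base-change ring: two extra polynomial variables. -/
abbrev PP (A : Type) [CommRing A] : Type := Polynomial (Polynomial A)

noncomputable def uu (A : Type) [CommRing A] : PP A := Polynomial.C Polynomial.X

noncomputable def vv (A : Type) [CommRing A] : PP A := Polynomial.X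

noncomputable def ff {A : Type} [CommRing A] (b c : A) : PP A :=
  Polynomial.C (Polynomial.C b) * vv A - uu A * Polynomial.C (Polynomial.C c)

variable {A : Type} [CommRing A]

lemma X_reg {B : Type} [CommRing B] (t : Polynomial B) (h : t * Polynomial.X = 0) : t = 0 := by
  ext n
  have := congrArg (Polynomial.coeff · (n + 1)) h
  simpa [Polynomial.coeff_mul_X] using this

lemma uu_reg (t : PP A) (h : uu A * t = 0) : t = 0 := by
  ext n m
  have := congrArg (Polynomial.coeff · n) h
  simp only [uu, Polynomial.coeff_C_mul, Polynomial.coeff_zero] at this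
  have := X_reg _ (by rw [mul_comm]; exact this)
  simp [this]

/-- Key lemma (i): `ff b c` is a nonzerodivisor. -/
lemma ff_reg {b c : A} (h : Good b c) {g : PP A} (hg : g * ff b c = 0) : g = 0 := by
  have hmem : ff b c ∈ nonZeroDivisors (PP A) := by
    rw [Polynomial.mem_nonZeroDivisors_iff]
    intro a ha
    rw [Polynomial.smul_eq_C_mul] at ha
    have ha' : Polynomial.C (a * Polynomial.C b) * Polynomial.X
        - Polynomial.C (a * (Polynomial.X * Polynomial.C c)) = 0 := by
      rw [← ha]; simp only [ff, uu, vv, map_mul]; ring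
    have h1 : a * Polynomial.C b = 0 := by
      have := congrArg (Polynomial.coeff · 1) ha'
      simpa [Polynomial.coeff_C] using this
    have h0 : a * (Polynomial.X * Polynomial.C c) = 0 := by
      have := congrArg (Polynomial.coeff · 0) ha'
      simpa [Polynomial.coeff_C] using this
    have h2 : a * Polynomial.C c = 0 := by
      apply X_reg
      calc a * Polynomial.C c * Polynomial.X = a * (Polynomial.X * Polynomial.C c) := by ring
      _ = 0 := h0
    ext j
    apply h
    · have := congrArg (Polynomial.coeff · j) h1
      simpa [Polynomial.coeff_mul_C] using this
    · have := congrArg (Polynomial.coeff · j) h2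
      simpa [Polynomial.coeff_mul_C] using this
  exact mem_nonZeroDivisors_iff_right.mp hmem g hg


/-- Key lemma (ii): divisibility. -/
lemma ff_dvd {b c : A} (h : Good b c) {g : PP A}
    (h1 : ff b c ∣ g * uu A) (h2 : ff b c ∣ g * vv A) : ff b c ∣ g := by
  obtain ⟨p, hp⟩ := h1
  obtain ⟨k, hk⟩ := h2
  have h3 : ff b c * (p * vv A - k * uu A) = 0 := by
    linear_combination vv A * hp.symm - uu A * hk.symm
  have h4 : p * vv A - k * uu A = 0 := by
    apply ff_reg h; linear_combination h3
  have h5 : p * vv A = k * uu A := by linear_combination h4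
  -- u = C X divides p
  have h6 : uu A ∣ p := by
    rw [uu, Polynomial.C_dvd_iff_dvd_coeff]
    intro i
    have := congrArg (Polynomial.coeff · (i + 1)) h5
    simp only [vv, uu, Polynomial.coeff_mul_X, Polynomial.coeff_mul_C] at this
    exact Dvd.intro_left _ this.symm
  obtain ⟨w, hw⟩ := h6
  refine ⟨w, ?_⟩
  have h7 : uu A * (g - ff b c * w) = 0 := by
    rw [hw] at hp; linear_combination hp
  have := uu_reg _ h7
  linear_combination this

/-- Key lemma (iii): the quotient by `ff` is nontrivial. -/
lemma ff_quot_nontrivial [Nontrivial A] (b c : A) :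
    Nontrivial (PP A ⧸ Ideal.span {ff b c}) := by
  apply Ideal.Quotient.nontrivial_iff.mpr
  intro htop
  have h1 : (1 : PP A) ∈ Ideal.span {ff b c} := htop ▸ Submodule.mem_top
  obtain ⟨t, ht⟩ := Ideal.mem_span_singleton'.mp h1
  have := congrArg (fun q : PP A => Polynomial.eval (0 : A) (Polynomial.eval (0 : Polynomial A) q)) ht
  simp [ff, uu, vv] at this

/-- Key lemma: goodness passes to the quotient. -/
lemma good_quot {b c : A} (h : Good b c) :
    Good (Ideal.Quotient.mk (Ideal.span {ff b c}) (uu A))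
      (Ideal.Quotient.mk (Ideal.span {ff b c}) (vv A)) := by
  intro gq hgu hgv
  obtain ⟨g, rfl⟩ := Ideal.Quotient.mk_surjective gq
  rw [← map_mul, Ideal.Quotient.eq_zero_iff_mem, Ideal.mem_span_singleton] at hgu hgv
  rw [Ideal.Quotient.eq_zero_iff_mem, Ideal.mem_span_singleton]
  exact ff_dvd h hgu hgv


open RingTheory.Sequence Pointwise in
/-- Transport a regular sequence along a ring isomorphism. -/
lemma isRegular_map_equiv {R S : Type} [CommRing R] [CommRing S] (e : R ≃+* S) (l : List R) :
    IsRegular R l ↔ IsRegular S (l.map e) := by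
  apply AddEquiv.isRegular_congr (e := e.toAddEquiv)
  rw [List.forall₂_map_right_iff]
  refine List.forall₂_same.mpr fun r _ x => ?_
  simp [smul_eq_mul]

open RingTheory.Sequence Pointwise in
/-- Transport a regular sequence on `QuotSMulTop r R` to the quotient ring
presented via a surjection with kernel `(r)`. -/
lemma isRegular_quotSMulTop {R S : Type} [CommRing R] [CommRing S] (π : R →+* S)
    (hs : Function.Surjective π) (r : R) (hker : RingHom.ker π = Ideal.span {r}) (l : List R) :
    IsRegular (QuotSMulTop r R) l ↔ IsRegular S (l.map π) := by
  have hsub : (r • ⊤ : Submodule R R) = (Ideal.span {r} : Ideal R) := by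
    ext x
    rw [← SetLike.mem_coe, Submodule.coe_pointwise_smul, Ideal.mem_span_singleton]
    constructor
    · rintro ⟨y, -, rfl⟩
      exact Dvd.intro y (by simp [smul_eq_mul, mul_comm])
    · rintro ⟨y, rfl⟩
      exact ⟨y, trivial, by simp [smul_eq_mul, mul_comm]⟩
  let e1 : QuotSMulTop r R ≃ₗ[R] (R ⧸ (Ideal.span {r} : Ideal R)) :=
    Submodule.quotEquivOfEq _ _ hsub
  let e2 : (R ⧸ (Ideal.span {r} : Ideal R)) ≃+* S :=
    (Ideal.quotEquivOfEq hker.symm).trans (RingHom.quotientKerEquivOfSurjective hs)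
  let e : QuotSMulTop r R ≃+ S := e1.toAddEquiv.trans e2.toAddEquiv
  have e_mk : ∀ y : R, e (Submodule.Quotient.mk y) = π y := by
    intro y
    show e2 (e1 (Submodule.Quotient.mk y)) = π y
    have h1 : e1 (Submodule.Quotient.mk y) = Ideal.Quotient.mk _ y := rfl
    rw [h1]
    show (RingHom.quotientKerEquivOfSurjective hs) ((Ideal.quotEquivOfEq hker.symm)
      (Ideal.Quotient.mk _ y)) = π y
    rw [Ideal.quotEquivOfEq_mk]
    exact RingHom.kerLift_mk π y
  apply AddEquiv.isRegular_congr (e := e)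
  rw [List.forall₂_map_right_iff]
  refine List.forall₂_same.mpr fun a _ x => ?_
  obtain ⟨y, rfl⟩ := Submodule.Quotient.mk_surjective _ x
  have : a • Submodule.Quotient.mk (p := (r • ⊤ : Submodule R R)) y
      = Submodule.Quotient.mk (a * y) := rfl
  rw [this, e_mk, e_mk, map_mul, smul_eq_mul]

/-- `C a` is a nonzerodivisor on `MvPolynomial σ A` if `a` is one on `A`. -/
lemma isSMulRegular_C {σ : Type} {a : A} (h : ∀ t : A, t * a = 0 → t = 0) :
    IsSMulRegular (MvPolynomial σ A) (C a : MvPolynomial σ A) := by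
  intro x y hxy
  have hsub : (C a : MvPolynomial σ A) * (x - y) = 0 := by
    simp only [smul_eq_mul] at hxy; linear_combination hxy
  have : x - y = 0 := by
    ext m
    have := congrArg (MvPolynomial.coeff m) hsub
    simp only [MvPolynomial.coeff_C_mul, MvPolynomial.coeff_zero] at this
    have := h _ (by rw [mul_comm]; exact this)
    simp [this]
  linear_combination this

/-- Kernel of coefficientwise reduction mod `(a)`. -/
lemma ker_map_C {σ : Type} (a : A) :
    RingHom.ker (MvPolynomial.map (σ := σ) (Ideal.Quotient.mk (Ideal.span {a})))
      = Ideal.span {(C a : MvPolynomial σ A)} := by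
  ext q
  rw [RingHom.mem_ker, Ideal.mem_span_singleton, MvPolynomial.C_dvd_iff_dvd_coeff]
  constructor
  · intro hq i
    rw [← Ideal.mem_span_singleton, ← Ideal.Quotient.eq_zero_iff_mem]
    have := congrArg (MvPolynomial.coeff i) hq
    simpa [MvPolynomial.coeff_map] using this
  · intro hq
    ext i
    simp only [MvPolynomial.coeff_map, MvPolynomial.coeff_zero,
      Ideal.Quotient.eq_zero_iff_mem, Ideal.mem_span_singleton]
    exact hq i


/-! ### The isomorphism peeling off the first pair of variables -/

noncomputable def fwdHom (A : Type) [CommRing A] (m : ℕ) :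
    MvPolynomial (Fin (m + 1) ⊕ Fin (m + 1)) A →+* MvPolynomial (Fin m ⊕ Fin m) (PP A) :=
  eval₂Hom ((C : PP A →+* _).comp ((Polynomial.C : Polynomial A →+* PP A).comp
      (Polynomial.C : A →+* Polynomial A)))
    (Sum.elim
      (fun i => Fin.cases (C (uu A)) (fun j => X (Sum.inl j)) i)
      (fun i => Fin.cases (C (vv A)) (fun j => X (Sum.inr j)) i))

noncomputable def bwdHom (A : Type) [CommRing A] (m : ℕ) :
    MvPolynomial (Fin m ⊕ Fin m) (PP A) →+* MvPolynomial (Fin (m + 1) ⊕ Fin (m + 1)) A :=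
  eval₂Hom (Polynomial.eval₂RingHom
      (Polynomial.eval₂RingHom (C : A →+* MvPolynomial (Fin (m + 1) ⊕ Fin (m + 1)) A)
        (X (Sum.inl 0))) (X (Sum.inr 0)))
    (Sum.elim (fun j => X (Sum.inl j.succ)) (fun j => X (Sum.inr j.succ)))

@[simp] lemma fwdHom_C (m : ℕ) (a : A) :
    fwdHom A m (C a) = C (Polynomial.C (Polynomial.C a)) := by simp [fwdHom]

@[simp] lemma fwdHom_Xl0 (m : ℕ) :
    fwdHom A m (X (Sum.inl 0)) = C (uu A) := by simp [fwdHom]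

@[simp] lemma fwdHom_Xr0 (m : ℕ) :
    fwdHom A m (X (Sum.inr 0)) = C (vv A) := by simp [fwdHom]

@[simp] lemma fwdHom_Xl_succ (m : ℕ) (j : Fin m) :
    fwdHom A m (X (Sum.inl j.succ)) = X (Sum.inl j) := by simp [fwdHom]

@[simp] lemma fwdHom_Xr_succ (m : ℕ) (j : Fin m) :
    fwdHom A m (X (Sum.inr j.succ)) = X (Sum.inr j) := by simp [fwdHom]

noncomputable def iso1 (A : Type) [CommRing A] (m : ℕ) :
    MvPolynomial (Fin (m + 1) ⊕ Fin (m + 1)) A ≃+* MvPolynomial (Fin m ⊕ Fin m) (PP A) :=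
  RingEquiv.ofRingHom (fwdHom A m) (bwdHom A m)
    (h₂ := by
      apply MvPolynomial.ringHom_ext
      · intro a
        simp [bwdHom]
      · rintro (i | i) <;> induction i using Fin.cases <;>
          simp [bwdHom, uu, vv])
    (h₁ := by
      apply MvPolynomial.ringHom_ext
      · intro p
        have key : (fwdHom A m).comp (Polynomial.eval₂RingHom
            (Polynomial.eval₂RingHom (C : A →+* MvPolynomial (Fin (m + 1) ⊕ Fin (m + 1)) A)
              (X (Sum.inl 0))) (X (Sum.inr 0)))
            = (C : PP A →+* MvPolynomial (Fin m ⊕ Fin m) (PP A)) := by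
          apply Polynomial.ringHom_ext'
          · apply Polynomial.ringHom_ext
            · intro a
              simp
            · simp [uu]
          · simp [vv]
        simpa [bwdHom] using RingHom.congr_fun key p
      · rintro (i | i) <;> simp [bwdHom])


/-! ### The sequences -/

noncomputable def gzero (A : Type) [CommRing A] (b c : A) (m : ℕ) :
    MvPolynomial (Fin (m + 1) ⊕ Fin (m + 1)) A :=
  C b * X (Sum.inr 0) - X (Sum.inl 0) * C c

noncomputable def tailseq (A : Type) [CommRing A] (m : ℕ) :
    List (MvPolynomial (Fin (m + 1) ⊕ Fin (m + 1)) A) :=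
  List.ofFn fun i : Fin m =>
    X (Sum.inl i.castSucc) * X (Sum.inr i.succ) - X (Sum.inl i.succ) * X (Sum.inr i.castSucc)

noncomputable def seq (A : Type) [CommRing A] (b c : A) (m : ℕ) :
    List (MvPolynomial (Fin (m + 1) ⊕ Fin (m + 1)) A) :=
  gzero A b c m :: tailseq A m

lemma map_gzero {B : Type} [CommRing B] (φ : A →+* B) (b c : A) (m : ℕ) :
    MvPolynomial.map φ (gzero A b c m) = gzero B (φ b) (φ c) m := by
  simp [gzero]

lemma map_tailseq {B : Type} [CommRing B] (φ : A →+* B) (m : ℕ) :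
    (tailseq A m).map (MvPolynomial.map φ) = tailseq B m := by
  rw [tailseq, tailseq, List.map_ofFn]
  exact congrArg List.ofFn (funext fun i => by simp)

lemma map_seq {B : Type} [CommRing B] (φ : A →+* B) (b c : A) (m : ℕ) :
    (seq A b c m).map (MvPolynomial.map φ) = seq B (φ b) (φ c) m := by
  rw [seq, seq, List.map_cons, map_gzero, map_tailseq]

lemma fwdHom_gzero (b c : A) (m : ℕ) :
    fwdHom A m (gzero A b c m) = C (ff b c) := by
  simp [gzero, ff, map_sub, map_mul]

lemma fwdHom_tailseq (m : ℕ) :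
    (tailseq A (m + 1)).map (fwdHom A (m + 1)) = seq (PP A) (uu A) (vv A) m := by
  rw [tailseq, List.map_ofFn, List.ofFn_succ, seq, tailseq]
  congr 1
  · show fwdHom A (m + 1) (X (Sum.inl (0 : Fin (m + 1)).castSucc) * X (Sum.inr (0 : Fin (m + 1)).succ)
        - X (Sum.inl (0 : Fin (m + 1)).succ) * X (Sum.inr (0 : Fin (m + 1)).castSucc)) = _
    simp only [map_sub, map_mul, Fin.castSucc_zero, fwdHom_Xl0, fwdHom_Xr0,
      fwdHom_Xl_succ, fwdHom_Xr_succ, gzero]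
  · exact congrArg List.ofFn (funext fun i => by
      simp [← Fin.succ_castSucc])


lemma topNeBot {R : Type} [CommRing R] [Nontrivial R] : (⊤ : Submodule R R) ≠ ⊥ := by
  intro h
  have h1 : (1 : R) ∈ (⊤ : Submodule R R) := Submodule.mem_top
  rw [h, Submodule.mem_bot] at h1
  exact one_ne_zero h1

@[simp] lemma iso1_coe (m : ℕ) : ⇑(iso1 A m) = ⇑(fwdHom A m) := rfl

set_option maxHeartbeats 8000000 in
set_option synthInstance.maxHeartbeats 1000000 in
open RingTheory.Sequence in
theorem main : ∀ (m : ℕ) (A : Type) [CommRing A] [Nontrivial A] (b c : A), Good b c →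
    IsRegular (MvPolynomial (Fin (m + 1) ⊕ Fin (m + 1)) A) (seq A b c m) := by
  intro m
  induction m with
  | zero =>
    intro A _ _ b c hgood
    rw [isRegular_map_equiv (S := MvPolynomial (Fin 0 ⊕ Fin 0) (PP A)) (iso1 A 0) _]
    have hl : (seq A b c 0).map (iso1 A 0) = [C (ff b c)] := by
      have h0 : tailseq A 0 = [] := rfl
      simp [seq, h0, fwdHom_gzero]
    rw [hl, RingTheory.Sequence.isRegular_cons_iff]
    refine ⟨isSMulRegular_C (fun t ht => ff_reg hgood ht), ?_⟩
    haveI := ff_quot_nontrivial (A := A) b c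
    letI : CommRing (PP A ⧸ Ideal.span {ff b c}) := inferInstance
    rw [isRegular_quotSMulTop (S := MvPolynomial (Fin 0 ⊕ Fin 0) (PP A ⧸ Ideal.span {ff b c})) (MvPolynomial.map (Ideal.Quotient.mk (Ideal.span {ff b c})))
      (MvPolynomial.map_surjective _ Ideal.Quotient.mk_surjective) (C (ff b c))
      (ker_map_C (ff b c)) []]
    rw [RingTheory.Sequence.isRegular_iff]
    refine ⟨RingTheory.Sequence.IsWeaklyRegular.nil _ _, ?_⟩
    simp only [List.map_nil, Ideal.ofList_nil, Submodule.bot_smul]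
    exact fun h => topNeBot h
  | succ m ih =>
    intro A _ _ b c hgood
    rw [isRegular_map_equiv (S := MvPolynomial (Fin (m + 1) ⊕ Fin (m + 1)) (PP A)) (iso1 A (m + 1)) _]
    have hl : (seq A b c (m + 1)).map (iso1 A (m + 1))
        = C (ff b c) :: seq (PP A) (uu A) (vv A) m := by
      rw [seq, List.map_cons, iso1_coe, fwdHom_gzero, fwdHom_tailseq]
    rw [hl, RingTheory.Sequence.isRegular_cons_iff]
    refine ⟨isSMulRegular_C (fun t ht => ff_reg hgood ht), ?_⟩
    haveI := ff_quot_nontrivial (A := A) b c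
    letI : CommRing (PP A ⧸ Ideal.span {ff b c}) := inferInstance
    rw [isRegular_quotSMulTop (S := MvPolynomial (Fin (m + 1) ⊕ Fin (m + 1)) (PP A ⧸ Ideal.span {ff b c})) (MvPolynomial.map (Ideal.Quotient.mk (Ideal.span {ff b c})))
      (MvPolynomial.map_surjective _ Ideal.Quotient.mk_surjective) (C (ff b c))
      (ker_map_C (ff b c)) (seq (PP A) (uu A) (vv A) m)]
    rw [map_seq]
    exact ih (PP A ⧸ Ideal.span {ff b c}) _ _ (good_quot hgood)

end Stmt6Aux

open Stmt6Aux in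
set_option maxHeartbeats 2000000 in
set_option synthInstance.maxHeartbeats 1000000 in
/-- The generators `f_i = x_i y_{i+1} - x_{i+1} y_i`, `1 ≤ i < n + 1`, of the
binomial edge ideal of the path graph on `n + 1` vertices form a regular
sequence in `K[x_1,…,x_{n+1},y_1,…,y_{n+1}]`. -/
theorem stmt6 (K : Type) [Field K] (n : ℕ) :
    RingTheory.Sequence.IsRegular
      (R := MvPolynomial (Fin (n + 1) ⊕ Fin (n + 1)) K)
      (MvPolynomial (Fin (n + 1) ⊕ Fin (n + 1)) K)
      (List.ofFn fun i : Fin n =>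
        X (Sum.inl i.castSucc) * X (Sum.inr i.succ)
          - X (Sum.inl i.succ) * X (Sum.inr i.castSucc)) := by
  have hT : (List.ofFn fun i : Fin n =>
      X (Sum.inl i.castSucc) * X (Sum.inr i.succ)
        - X (Sum.inl i.succ) * X (Sum.inr i.castSucc)) = tailseq K n := rfl
  rw [hT]
  cases n with
  | zero =>
    have h0 : tailseq K 0 = [] := rfl
    rw [h0, RingTheory.Sequence.isRegular_iff]
    refine ⟨RingTheory.Sequence.IsWeaklyRegular.nil _ _, ?_⟩
    simp only [Ideal.ofList_nil, Submodule.bot_smul]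
    exact fun h => topNeBot h
  | succ m =>
    rw [isRegular_map_equiv (S := MvPolynomial (Fin (m + 1) ⊕ Fin (m + 1)) (PP K)) (iso1 K (m + 1)) _, iso1_coe, fwdHom_tailseq]
    refine main m (PP K) (uu K) (vv K) ?_
    intro g hg _
    rcases mul_eq_zero.mp hg with h | h
    · exact h
    · exact absurd h (Polynomial.C_ne_zero.mpr Polynomial.X_ne_zero)
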